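/- Fix a resolution level R ≥ 1. The linear span of the family of Legendre wavelets {ψ_{h,g} : 1 ≤ h ≤ 2^{R−1}, g ∈ ℕ} is dense in L²([0,1]); consequently every f ∈ L²([0,1]) is the L²-limit of finite linear combinations of Legendre wavelets at level R. -/

import Mathlib

open MeasureTheory

/-- The Legendre polynomial of degree `g` on `[−1,1]`, via the Rodrigues formula
`P_g(y) = (1/(2^g g!)) (d/dy)^g [(y² − 1)^g]`. -/
noncomputable def legendreP (g : ℕ) (y : ℝ) : ℝ :=
  (1 / ((2 : ℝ) ^ g * (g.factorial : ℝ))) * iteratedDeriv g (fun z : ℝ => (z ^ 2 - 1) ^ g) y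

/-- The Legendre wavelet `ψ_{h,g}` at resolution level `R`. -/
noncomputable def legendreWavelet (R h g : ℕ) (x : ℝ) : ℝ :=
  if ((h : ℝ) - 1) / 2 ^ (R - 1) ≤ x ∧ x ≤ (h : ℝ) / 2 ^ (R - 1) then
    (2 : ℝ) ^ ((R : ℝ) / 2) * Real.sqrt ((g : ℝ) + 1 / 2) *
      legendreP g (2 ^ R * x - 2 * (h : ℝ) + 1)
  else 0


section LegendreAux
open Polynomial
open scoped ENNReal

noncomputable def legQ (g : ℕ) : Polynomial ℝ :=
  Polynomial.C (1 / ((2:ℝ)^g * (g.factorial : ℝ))) *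
    (Polynomial.derivative^[g] ((Polynomial.X^2 - 1)^g))

lemma iteratedDeriv_polyEval (q : Polynomial ℝ) (n : ℕ) :
    iteratedDeriv n (fun z : ℝ => q.eval z) = fun y => (Polynomial.derivative^[n] q).eval y := by
  induction n with
  | zero => simp
  | succ n ih =>
    rw [iteratedDeriv_succ, ih, Function.iterate_succ_apply']
    ext y
    simp [Polynomial.deriv]

lemma legendreP_eq (g : ℕ) (y : ℝ) : legendreP g y = (legQ g).eval y := by
  unfold legendreP legQ
  have h : (fun z : ℝ => (z^2 - 1)^g) = fun z => (((X : Polynomial ℝ)^2 - 1)^g).eval z := by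
    ext z; simp
  rw [h, iteratedDeriv_polyEval]
  simp

lemma natDegree_base (g : ℕ) : (((X : Polynomial ℝ)^2 - 1)^g).natDegree = g * 2 := by
  rw [natDegree_pow]
  congr 1
  have : ((X : Polynomial ℝ)^2 - 1) = X^2 - C 1 := by simp
  rw [this, natDegree_X_pow_sub_C]

lemma coeff_base (g : ℕ) : (((X : Polynomial ℝ)^2 - 1)^g).coeff (g * 2) = 1 := by
  have hm : (((X : Polynomial ℝ)^2 - 1)^g).Monic := by
    apply Monic.pow
    have : ((X : Polynomial ℝ)^2 - 1) = X^2 - C 1 := by simp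
    rw [this]
    exact monic_X_pow_sub_C 1 two_ne_zero
  have := hm.leadingCoeff
  rwa [leadingCoeff, natDegree_base] at this

lemma legQ_natDegree_le (g : ℕ) : (legQ g).natDegree ≤ g := by
  refine le_trans (natDegree_C_mul_le _ _) ?_
  refine le_trans (natDegree_iterate_derivative _ _) ?_
  rw [natDegree_base]
  omega

lemma legQ_coeff_ne (g : ℕ) : (legQ g).coeff g ≠ 0 := by
  unfold legQ
  rw [coeff_C_mul, coeff_iterate_derivative]
  have h1 : (g + g) = g * 2 := by ring
  rw [h1, coeff_base]
  have h2 : (0:ℝ) < ((g * 2).descFactorial g : ℝ) := by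
    exact_mod_cast Nat.pos_of_ne_zero
      (fun hz => absurd (Nat.descFactorial_eq_zero_iff_lt.mp hz) (by omega))
  have h3 : (0:ℝ) < 1 / ((2:ℝ)^g * (g.factorial : ℝ)) := by positivity
  rw [nsmul_eq_mul, mul_one]
  positivity

lemma span_legQ : ∀ (n : ℕ) (q : Polynomial ℝ), q.natDegree ≤ n →
    ∃ d : ℕ → ℝ, q = ∑ g ∈ Finset.range (n+1), C (d g) * legQ g := by
  intro n
  induction n with
  | zero =>
    intro q hq
    refine ⟨fun _ => q.coeff 0 / (legQ 0).coeff 0, ?_⟩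
    rw [Finset.sum_range_one]
    have h0 : legQ 0 = C ((legQ 0).coeff 0) := eq_C_of_natDegree_le_zero (legQ_natDegree_le 0)
    conv_lhs => rw [eq_C_of_natDegree_le_zero hq]
    nth_rewrite 2 [h0]
    rw [← C_mul, div_mul_cancel₀ _ (legQ_coeff_ne 0)]
  | succ n ih =>
    intro q hq
    set a := q.coeff (n+1) with ha
    set b := (legQ (n+1)).coeff (n+1) with hb
    have hbne := legQ_coeff_ne (n+1)
    set q' := q - C (a/b) * legQ (n+1) with hq'
    have hdeg : q'.natDegree ≤ n := by
      rw [natDegree_le_iff_coeff_eq_zero]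
      intro N hN
      rcases eq_or_lt_of_le (Nat.succ_le_of_lt hN) with hNe | hNl
      · rw [hq', coeff_sub, coeff_C_mul, ← hNe, ← ha, ← hb, div_mul_cancel₀ _ hbne, sub_self]
      · rw [hq', coeff_sub, coeff_C_mul]
        rw [natDegree_le_iff_coeff_eq_zero.mp hq N hNl,
          coeff_eq_zero_of_natDegree_lt (lt_of_le_of_lt (legQ_natDegree_le (n+1)) hNl)]
        ring
    obtain ⟨d, hd⟩ := ih q' hdeg
    refine ⟨Function.update d (n+1) (a/b), ?_⟩
    rw [Finset.sum_range_succ, Function.update_self]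
    have hsum : ∑ g ∈ Finset.range (n+1), C (Function.update d (n+1) (a/b) g) * legQ g
        = ∑ g ∈ Finset.range (n+1), C (d g) * legQ g := by
      refine Finset.sum_congr rfl fun g hg => ?_
      rw [Function.update_of_ne (by have := Finset.mem_range.mp hg; omega)]
    rw [hsum, ← hd, hq']
    ring

lemma legendre_piece (R h : ℕ) (p : Polynomial ℝ) :
    ∃ c : ℕ → ℝ, ∀ x : ℝ, ((h:ℝ) - 1) / 2 ^ (R - 1) ≤ x → x ≤ (h:ℝ) / 2 ^ (R - 1) →
      ∑ g ∈ Finset.range (p.natDegree + 1), c g * legendreWavelet R h g x = p.eval x := by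
  set pt := p.comp (C (1/(2:ℝ)^R) * X + C ((2*(h:ℝ)-1)/2^R)) with hpt
  have hdeg : pt.natDegree ≤ p.natDegree := by
    refine le_trans natDegree_comp_le ?_
    have h1 : (C (1/(2:ℝ)^R) * X + C ((2*(h:ℝ)-1)/2^R)).natDegree ≤ 1 := by
      refine le_trans (natDegree_add_le _ _) ?_
      simp [natDegree_C_mul_le]
    calc p.natDegree * (C (1/(2:ℝ)^R) * X + C ((2*(h:ℝ)-1)/2^R)).natDegree
        ≤ p.natDegree * 1 := Nat.mul_le_mul_left _ h1
      _ = p.natDegree := mul_one _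
  obtain ⟨d, hd⟩ := span_legQ p.natDegree pt hdeg
  refine ⟨fun g => d g / ((2:ℝ) ^ ((R:ℝ)/2) * Real.sqrt ((g:ℝ) + 1/2)), fun x hx1 hx2 => ?_⟩
  have h2R : (2:ℝ)^R ≠ 0 := by positivity
  have step : ∀ g ∈ Finset.range (p.natDegree + 1),
      d g / ((2:ℝ) ^ ((R:ℝ)/2) * Real.sqrt ((g:ℝ) + 1/2)) * legendreWavelet R h g x
        = d g * (legQ g).eval (2^R*x - 2*(h:ℝ) + 1) := by
    intro g _
    have hA : (0:ℝ) < (2:ℝ) ^ ((R:ℝ)/2) := Real.rpow_pos_of_pos two_pos _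
    have hB : (0:ℝ) < Real.sqrt ((g:ℝ) + 1/2) := Real.sqrt_pos.mpr (by positivity)
    have hAB : (2:ℝ) ^ ((R:ℝ)/2) * Real.sqrt ((g:ℝ) + 1/2) ≠ 0 := by positivity
    rw [legendreWavelet, if_pos ⟨hx1, hx2⟩, legendreP_eq]
    rw [div_mul_eq_mul_div, div_eq_iff hAB]
    ring
  rw [Finset.sum_congr rfl step]
  have : ∑ g ∈ Finset.range (p.natDegree + 1), d g * (legQ g).eval (2^R*x - 2*(h:ℝ) + 1)
      = pt.eval (2^R*x - 2*(h:ℝ) + 1) := by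
    rw [hd, eval_finset_sum]
    exact Finset.sum_congr rfl fun g _ => by rw [eval_mul, eval_C]
  rw [this, hpt, eval_comp]
  congr 1
  simp only [eval_add, eval_mul, eval_C, eval_X]
  field_simp
  ring

end LegendreAux

open scoped ENNReal in
/-- Density of the span of the Legendre wavelets at level `R` in `L²([0,1])`:
every `f ∈ L²([0,1])` is approximated, to arbitrary accuracy in the `L²` norm,
by finite linear combinations of the wavelets `ψ_{h,g}`, `1 ≤ h ≤ 2^{R−1}`, `g ∈ ℕ`. -/
theorem legendreWavelet_span_dense (R : ℕ) (hR : 1 ≤ R) (f : ℝ → ℝ)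
    (hf : MemLp f 2 (volume.restrict (Set.Icc (0 : ℝ) 1))) :
    ∀ ε : ℝ, 0 < ε →
      ∃ (s : Finset (ℕ × ℕ)) (c : ℕ × ℕ → ℝ),
        (∀ p ∈ s, 1 ≤ p.1 ∧ p.1 ≤ 2 ^ (R - 1)) ∧
        eLpNorm (fun x => f x - ∑ p ∈ s, c p * legendreWavelet R p.1 p.2 x) 2
            (volume.restrict (Set.Icc (0 : ℝ) 1)) < ENNReal.ofReal ε := by
  intro ε hε
  have hε3 : (0:ℝ) < ε/3 := by linarith
  obtain ⟨g, -, hfg, hgc, -⟩ := hf.exists_hasCompactSupport_eLpNorm_sub_le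
    (by norm_num : (2:ℝ≥0∞) ≠ ⊤) (ε := ENNReal.ofReal (ε/3))
    (by simp only [ne_eq, ENNReal.ofReal_eq_zero, not_le]; linarith)
  obtain ⟨q, hq⟩ := exists_polynomial_near_of_continuousOn 0 1 g hgc.continuousOn (ε/3) hε3
  set m : ℕ := 2 ^ (R-1) with hm
  have hM : (0:ℝ) < (2:ℝ) ^ (R-1) := by positivity
  have hcast : ((m:ℕ):ℝ) = (2:ℝ) ^ (R-1) := by rw [hm]; push_cast; norm_num
  choose cc hcc using fun h => legendre_piece R h q
  refine ⟨(Finset.Icc 1 m) ×ˢ Finset.range (q.natDegree + 1), fun pr => cc pr.1 pr.2, ?_, ?_⟩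
  · intro pr hpr
    have := (Finset.mem_product.mp hpr).1
    exact Finset.mem_Icc.mp this
  have key : ∀ x ∈ Set.Icc (0:ℝ) 1, (∀ k : ℕ, x ≠ (k:ℝ) / 2 ^ (R-1)) →
      ∑ pr ∈ (Finset.Icc 1 m) ×ˢ Finset.range (q.natDegree + 1),
        cc pr.1 pr.2 * legendreWavelet R pr.1 pr.2 x = q.eval x := by
    intro x hx hxk
    rw [Finset.sum_product]
    set t := (2:ℝ) ^ (R-1) * x with ht
    have hx0 : 0 < x := lt_of_le_of_ne hx.1 (fun e => hxk 0 (by simp [← e]))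
    have hx1 : x < 1 := lt_of_le_of_ne hx.2 (fun e => hxk m (by rw [e, ← hcast]; field_simp [hcast]))
    have ht0 : (0:ℝ) ≤ t := by positivity
    have htm : t < (m:ℝ) := by rw [hcast, ht]; nlinarith
    have hne : ∀ k : ℕ, t ≠ (k:ℝ) := by
      intro k hk
      exact hxk k (by rw [eq_div_iff (ne_of_gt hM), mul_comm, ← ht, hk])
    have hfl : ((Nat.floor t : ℕ) : ℝ) ≤ t := Nat.floor_le ht0
    have hfl2 : t < (Nat.floor t : ℝ) + 1 := Nat.lt_floor_add_one t
    set h₀ : ℕ := Nat.floor t + 1 with hh₀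
    have h₀mem : h₀ ∈ Finset.Icc 1 m := by
      rw [Finset.mem_Icc]
      refine ⟨by omega, ?_⟩
      have : Nat.floor t < m := by
        rw [Nat.floor_lt ht0]
        exact htm
      omega
    rw [Finset.sum_eq_single h₀]
    · apply hcc h₀ x
      · rw [div_le_iff₀ hM]
        push_cast [hh₀]
        rw [mul_comm, ← ht]
        linarith
      · rw [le_div_iff₀ hM]
        push_cast [hh₀]
        rw [mul_comm, ← ht]
        linarith
    · intro h' hmem hne'
      apply Finset.sum_eq_zero
      intro g' _
      suffices hz : legendreWavelet R h' g' x = 0 by rw [hz, mul_zero]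
      rw [legendreWavelet, if_neg]
      rintro ⟨hl, hr⟩
      obtain ⟨h'1, h'm⟩ := Finset.mem_Icc.mp hmem
      rw [div_le_iff₀ hM] at hl
      rw [le_div_iff₀ hM] at hr
      rw [mul_comm, ← ht] at hl hr
      have e1 : t ≠ (h':ℝ) := hne h'
      have e2 : t ≠ (h':ℝ) - 1 := by
        have := hne (h' - 1)
        rwa [Nat.cast_sub h'1, Nat.cast_one] at this
      have hfloor : Nat.floor t = h' - 1 := by
        rw [Nat.floor_eq_iff ht0]
        constructor
        · rw [Nat.cast_sub h'1, Nat.cast_one]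
          exact lt_of_le_of_ne hl (Ne.symm e2) |>.le
        · rw [Nat.cast_sub h'1, Nat.cast_one, sub_add_cancel]
          exact lt_of_le_of_ne hr e1
      exact hne' (by omega)
    · intro habs
      exact absurd h₀mem habs
  have hzero : volume (Set.range fun k : ℕ => (k:ℝ) / 2 ^ (R-1)) = 0 :=
    (Set.countable_range _).measure_zero _
  have h2 : ∀ᵐ x : ℝ, ∀ k : ℕ, x ≠ (k:ℝ) / 2 ^ (R-1) := by
    rw [ae_iff]
    refine measure_mono_null ?_ hzero
    intro x hx
    push_neg at hx
    obtain ⟨k, hk⟩ := hx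
    exact ⟨k, hk.symm⟩
  have hae : ∀ᵐ x ∂(volume.restrict (Set.Icc (0:ℝ) 1)),
      f x - ∑ pr ∈ (Finset.Icc 1 m) ×ˢ Finset.range (q.natDegree + 1),
        cc pr.1 pr.2 * legendreWavelet R pr.1 pr.2 x = f x - q.eval x := by
    filter_upwards [ae_restrict_mem measurableSet_Icc, ae_restrict_of_ae h2] with x hx hx2
    rw [key x hx hx2]
  have hbound : eLpNorm (fun x => g x - q.eval x) 2 (volume.restrict (Set.Icc (0:ℝ) 1))
      ≤ ENNReal.ofReal (ε/3) := by
    have hb : ∀ᵐ x ∂(volume.restrict (Set.Icc (0:ℝ) 1)), ‖g x - q.eval x‖ ≤ ε/3 := by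
      filter_upwards [ae_restrict_mem measurableSet_Icc] with x hx
      rw [Real.norm_eq_abs, abs_sub_comm]
      exact (hq x hx).le
    refine le_trans (eLpNorm_le_of_ae_bound hb) ?_
    have huniv : (volume.restrict (Set.Icc (0:ℝ) 1)) Set.univ = 1 := by
      rw [Measure.restrict_apply_univ, Real.volume_Icc]
      norm_num
    rw [huniv, ENNReal.one_rpow, one_mul]
  calc eLpNorm (fun x => f x - ∑ pr ∈ (Finset.Icc 1 m) ×ˢ Finset.range (q.natDegree + 1),
        cc pr.1 pr.2 * legendreWavelet R pr.1 pr.2 x) 2 (volume.restrict (Set.Icc (0:ℝ) 1))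
      = eLpNorm (fun x => f x - q.eval x) 2 (volume.restrict (Set.Icc (0:ℝ) 1)) :=
        eLpNorm_congr_ae hae
    _ ≤ eLpNorm (f - g) 2 (volume.restrict (Set.Icc (0:ℝ) 1))
        + eLpNorm (fun x => g x - q.eval x) 2 (volume.restrict (Set.Icc (0:ℝ) 1)) := by
        have hsplit : (fun x => f x - q.eval x)
            = (f - g) + fun x => g x - q.eval x := by
          ext x; simp only [Pi.add_apply, Pi.sub_apply]; ring
        rw [hsplit]
        exact eLpNorm_add_le (hf.aestronglyMeasurable.sub hgc.aestronglyMeasurable)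
          ((hgc.sub q.continuous).aestronglyMeasurable) one_le_two
    _ ≤ ENNReal.ofReal (ε/3) + ENNReal.ofReal (ε/3) := add_le_add hfg hbound
    _ < ENNReal.ofReal ε := by
        rw [← ENNReal.ofReal_add hε3.le hε3.le]
        exact ENNReal.ofReal_lt_ofReal_iff hε |>.mpr (by linarith)
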